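/- Assume g preserves |−|. Then for every additive monoid homomorphism v : S →+ ℝ, the twisted isomorphism F maps the tilted ring K[S']^{v∘e} := { x ∈ AddMonoidAlgebra K S' : |x u| ≤ exp(v (e u)) for all u ∈ S' } bijectively onto the tilted ring K[S]^v := { x ∈ AddMonoidAlgebra K S : |x s| ≤ exp(v s) for all s ∈ S }, i.e. F '' K[S']^{v∘e} = K[S]^v. Moreover, for any ideal 𝔞 of AddMonoidAlgebra K S with 𝔞' := F⁻¹(𝔞), one has F '' (𝔞' ∩ K[S']^{v∘e}) = 𝔞 ∩ K[S]^v. (This is the key step in the proof that the Gröbner complex of a Galois-equivariant embedding is invariant under the Galois action.) -/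

import Mathlib

/-- Assuming `g` preserves `|−|`, the twisted isomorphism `F` maps the tilted
ring `K[S']^{v∘e}` bijectively onto the tilted ring `K[S]^v`, and for any ideal `𝔞` with
`𝔞' = F⁻¹(𝔞)` it maps `𝔞' ∩ K[S']^{v∘e}` onto `𝔞 ∩ K[S]^v`. -/
theorem stmt_6 (K₀ K : Type*) [Field K₀] [Field K] [Algebra K₀ K]
    (absv : K → ℝ)
    (habs_nonneg : ∀ a : K, 0 ≤ absv a)
    (habs_eq_zero : ∀ a : K, absv a = 0 ↔ a = 0)
    (habs_mul : ∀ a b : K, absv (a * b) = absv a * absv b)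
    (habs_ultra : ∀ a b : K, absv (a + b) ≤ max (absv a) (absv b))
    (g : K ≃ₐ[K₀] K) (hg : ∀ a : K, absv (g a) = absv a)
    (S S' : Type*) [AddCommMonoid S] [AddCommMonoid S'] (e : S' ≃+ S)
    (F : AddMonoidAlgebra K S' ≃ₐ[K₀] AddMonoidAlgebra K S)
    (hF : ∀ (u : S') (a : K),
      F (AddMonoidAlgebra.single u a) = AddMonoidAlgebra.single (e u) (g a))
    (v : S →+ ℝ) :
    (⇑F '' {x : AddMonoidAlgebra K S' | ∀ u : S', absv (x.coeff u) ≤ Real.exp (v (e u))}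
      = {x : AddMonoidAlgebra K S | ∀ s : S, absv (x.coeff s) ≤ Real.exp (v s)}) ∧
    (∀ (𝔞 : Ideal (AddMonoidAlgebra K S)) (𝔞' : Ideal (AddMonoidAlgebra K S')),
      (∀ x : AddMonoidAlgebra K S', x ∈ 𝔞' ↔ F x ∈ 𝔞) →
      ⇑F '' ((𝔞' : Set (AddMonoidAlgebra K S')) ∩
          {x : AddMonoidAlgebra K S' | ∀ u : S', absv (x.coeff u) ≤ Real.exp (v (e u))})
        = (𝔞 : Set (AddMonoidAlgebra K S)) ∩
          {x : AddMonoidAlgebra K S | ∀ s : S, absv (x.coeff s) ≤ Real.exp (v s)}) := by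
  -- coefficient formula for F
  have hcoeff : ∀ (x : AddMonoidAlgebra K S') (s : S), (F x).coeff s = g (x.coeff (e.symm s)) := by
    intro x
    induction x using AddMonoidAlgebra.induction with
    | zero => intro s; simp
    | single_add u a x hu ha ih =>
      intro s
      rw [map_add, hF, AddMonoidAlgebra.coeff_add, AddMonoidAlgebra.coeff_add, Finsupp.add_apply,
        Finsupp.add_apply, map_add, ih s, AddMonoidAlgebra.coeff_single, AddMonoidAlgebra.coeff_single]
      congr 1
      by_cases h : e u = s
      · have h2 : u = e.symm s := by rw [← h]; simp
        simp [Finsupp.single_apply, h, h2]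
      · have h2 : ¬ u = e.symm s := fun hc => h (by rw [hc]; simp)
        simp [Finsupp.single_apply, h, h2]
  -- membership equivalence
  have hmem : ∀ x : AddMonoidAlgebra K S',
      (∀ u : S', absv (x.coeff u) ≤ Real.exp (v (e u))) ↔
      (∀ s : S, absv ((F x).coeff s) ≤ Real.exp (v s)) := by
    intro x
    constructor
    · intro h s
      rw [hcoeff x s, hg]
      have := h (e.symm s)
      simpa using this
    · intro h u
      have := h (e u)
      rw [hcoeff x (e u), hg] at this
      simpa using this
  have himg : ⇑F '' {x : AddMonoidAlgebra K S' | ∀ u : S', absv (x.coeff u) ≤ Real.exp (v (e u))}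
      = {x : AddMonoidAlgebra K S | ∀ s : S, absv (x.coeff s) ≤ Real.exp (v s)} := by
    ext y
    constructor
    · rintro ⟨x, hx, rfl⟩
      exact (hmem x).1 hx
    · intro hy
      refine ⟨F.symm y, ?_, by simp⟩
      have := (hmem (F.symm y))
      simp only [AlgEquiv.apply_symm_apply] at this
      exact this.2 hy
  refine ⟨himg, ?_⟩
  intro 𝔞 𝔞' h𝔞
  ext y
  constructor
  · rintro ⟨x, ⟨hx1, hx2⟩, rfl⟩
    exact ⟨(h𝔞 x).1 hx1, (hmem x).1 hx2⟩
  · rintro ⟨hy1, hy2⟩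
    refine ⟨F.symm y, ⟨?_, ?_⟩, by simp⟩
    · show F.symm y ∈ 𝔞'
      rw [h𝔞]; simpa using hy1
    · have := (hmem (F.symm y))
      simp only [AlgEquiv.apply_symm_apply] at this
      exact this.2 hy2
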